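/- Let P, Q : ℕ → Prop with P n → Q n for all n, and let s, u : ℕ → ℕ → Bool be such that for every i, the sequence s i semidecides P i and the sequence u i semidecides Q i. Then Ψ(s) ≤ Ψ(u). -/

import Mathlib

/-- A Boolean sequence `b` semidecides a proposition `Q` if `Q ↔ ∃ j, b j = true`. -/
def Semidecides (b : ℕ → Bool) (Q : Prop) : Prop :=
  Q ↔ ∃ j, b j = true

open Classical in
/-- `tCount s n k` is the number of indices `i < n` such that `s i j = true` for some `j ≤ k`. -/
noncomputable def tCount (s : ℕ → ℕ → Bool) (n k : ℕ) : ℕ :=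
  ((Finset.range n).filter (fun i => ∃ j ≤ k, s i j = true)).card

/-- The `n`-th characteristic approximant `Ψₙ(s)`. -/
noncomputable def psiApprox (s : ℕ → ℕ → Bool) (n : ℕ) : Ordinal :=
  ⨆ k : ℕ, (Ordinal.omega0 * (tCount s n k) + k)

/-- The characteristic ordinal `Ψ(s)`. -/
noncomputable def psi (s : ℕ → ℕ → Bool) : Ordinal :=
  ⨆ n : ℕ, (psiApprox s n + n)

theorem psi_monotone (P Q : ℕ → Prop) (hPQ : ∀ n, P n → Q n)
    (s u : ℕ → ℕ → Bool)
    (hs : ∀ i, Semidecides (s i) (P i)) (hu : ∀ i, Semidecides (u i) (Q i)) :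
    psi s ≤ psi u := by
  classical
  have approx : ∀ n, psiApprox s n ≤ psiApprox u n := by
    intro n
    set f : ℕ → ℕ := fun i => if h : Q i then Nat.find ((hu i).mp h) else 0 with hf
    set K : ℕ := (Finset.range n).sup f with hK
    have key : ∀ k, tCount s n k ≤ tCount u n (max k K) := by
      intro k
      apply Finset.card_le_card
      intro i hi
      simp only [Finset.mem_filter, Finset.mem_range] at hi ⊢
      obtain ⟨hin, j, hjk, hij⟩ := hi
      refine ⟨hin, ?_⟩
      have hQi : Q i := hPQ i ((hs i).mpr ⟨j, hij⟩)
      refine ⟨f i, ?_, ?_⟩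
      · exact le_trans (le_trans (Finset.le_sup (Finset.mem_range.mpr hin)) (le_refl K))
          (le_max_right k K)
      · simp only [hf, dif_pos hQi]
        exact Nat.find_spec ((hu i).mp hQi)
    unfold psiApprox
    refine ciSup_le fun k => ?_
    refine le_trans ?_ (le_ciSup (Ordinal.bddAbove_range _) (max k K))
    have h1 : (Ordinal.omega0 * (tCount s n k) : Ordinal) ≤
        Ordinal.omega0 * (tCount u n (max k K)) := by
      exact mul_le_mul_right (by exact_mod_cast key k) _
    have h2 : (k : Ordinal) ≤ ((max k K : ℕ) : Ordinal) := Nat.cast_le.mpr (le_max_left k K)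
    exact add_le_add h1 h2
  refine ciSup_le fun n => ?_
  exact le_trans (add_le_add_left (approx n) _)
    (le_ciSup (Ordinal.bddAbove_range _) n)
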